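/- Let (T, U, Q) be a duality triple and f: X → Y a morphism in T. Then f is phantom if and only if the composite i_Y ∘ f: X → Y → Q²(Y) is zero. -/
import Mathlib

open CategoryTheory CategoryTheory.Limits CategoryTheory.Pretriangulated Opposite

universe v u

namespace Paper

variable (T : Type u) [Category.{v} T]

/-- An object `C` of a category is *compact* if `Hom(C,-)` preserves set-indexed coproducts. -/
def IsCompactObj (C : T) : Prop :=
  ∀ α : Type v, Nonempty (PreservesColimitsOfShape (Discrete α) (coyoneda.obj (op C)))

section Triangulated

variable [HasZeroObject T] [Preadditive T] [HasShift T ℤ]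
  [∀ n : ℤ, (shiftFunctor T n).Additive] [Pretriangulated T]

/-- A triangulated category is *compactly generated* if it has set-indexed coproducts and
there is a set `G` of compact objects such that `X ≃ 0` iff `Hom(Σⁿ G, X) = 0` for all
`G ∈ G` and `n ∈ ℤ`. -/
structure IsCompactlyGenerated : Prop where
  hasCoproducts : ∀ α : Type v, HasColimitsOfShape (Discrete α) T
  exists_generators : ∃ G : Set T, (∀ C ∈ G, IsCompactObj T C) ∧
    ∀ X : T, (∀ C ∈ G, ∀ n : ℤ, ∀ f : C⟦n⟧ ⟶ X, f = 0) → IsZero X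

variable {T}

/-- A morphism is *phantom* if its composite with any map out of a compact object vanishes. -/
def IsPhantom {X Y : T} (f : X ⟶ Y) : Prop :=
  ∀ ⦃C : T⦄, IsCompactObj T C → ∀ g : C ⟶ X, g ≫ f = 0

/-- A triangle `X ⟶ Y ⟶ Z ⟶ ΣX` is *pure* if it is distinguished and for every compact `C`
the sequence `0 ⟶ Hom(C,X) ⟶ Hom(C,Y) ⟶ Hom(C,Z) ⟶ 0` is exact, i.e. the sequence
`0 ⟶ yX ⟶ yY ⟶ yZ ⟶ 0` is exact in `Mod-T^c`. -/
def IsPureTriangle (Tr : Triangle T) : Prop :=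
  (Tr ∈ distTriang T) ∧
  ∀ ⦃C : T⦄, IsCompactObj T C →
    (Function.Injective fun g : C ⟶ Tr.obj₁ => g ≫ Tr.mor₁) ∧
    (∀ g : C ⟶ Tr.obj₂, g ≫ Tr.mor₂ = 0 → ∃ h : C ⟶ Tr.obj₁, h ≫ Tr.mor₁ = g) ∧
    (Function.Surjective fun g : C ⟶ Tr.obj₂ => g ≫ Tr.mor₂)

/-- A morphism is a *pure monomorphism* if it appears as the first map of a pure triangle. -/
def IsPureMono {X Y : T} (f : X ⟶ Y) : Prop :=
  ∃ (Z : T) (g : Y ⟶ Z) (h : Z ⟶ X⟦(1:ℤ)⟧), IsPureTriangle (Triangle.mk f g h)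

/-- A morphism is a *pure epimorphism* if it appears as the second map of a pure triangle. -/
def IsPureEpi {Y Z : T} (g : Y ⟶ Z) : Prop :=
  ∃ (X : T) (f : X ⟶ Y) (h : Z ⟶ X⟦(1:ℤ)⟧), IsPureTriangle (Triangle.mk f g h)

/-- An object `X` is *pure injective* if every phantom map into `X` is zero
(equivalently, `yX` is injective in `Mod-T^c`). -/
def IsPureInjective (X : T) : Prop :=
  ∀ ⦃Y : T⦄ (f : Y ⟶ X), IsPhantom f → f = 0

end Triangulated

section DualityTriple

variable (U : Type u) [Category.{v} U]
variable [HasZeroObject T] [Preadditive T] [HasShift T ℤ]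
  [∀ n : ℤ, (shiftFunctor T n).Additive] [Pretriangulated T]
variable [HasZeroObject U] [Preadditive U] [HasShift U ℤ]
  [∀ n : ℤ, (shiftFunctor U n).Additive] [Pretriangulated U]

/-- A *duality triple* `(T, U, Q)` consists of compactly generated triangulated categories
`T` and `U` together with exact functors `Q : Tᵒᵖ ⥤ U` and `Q : Uᵒᵖ ⥤ T` such that
(1) `Q X` is pure injective for all `X`;
(2) there is a natural pure monomorphism `i_X : X ⟶ Q²X` for all `X`;
(3) `Q(i_X) ∘ i_{Q X} = id`;
(4) `Q` sends set-indexed coproducts to products. -/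
structure DualityTriple where
  /-- The contravariant functor `Q : Tᵒᵖ ⥤ U`. -/
  QT : Tᵒᵖ ⥤ U
  /-- The contravariant functor `Q : Uᵒᵖ ⥤ T`. -/
  QU : Uᵒᵖ ⥤ T
  cgT : IsCompactlyGenerated T
  cgU : IsCompactlyGenerated U
  QT_additive : QT.Additive
  QU_additive : QU.Additive
  /-- `Q : Tᵒᵖ ⥤ U` is exact: it sends distinguished triangles to distinguished triangles. -/
  QT_exact : ∀ Tr ∈ distTriang T, ∃ h : QT.obj (op Tr.obj₁) ⟶ (QT.obj (op Tr.obj₃))⟦(1:ℤ)⟧,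
    Triangle.mk (QT.map Tr.mor₂.op) (QT.map Tr.mor₁.op) h ∈ distTriang U
  QU_exact : ∀ Tr ∈ distTriang U, ∃ h : QU.obj (op Tr.obj₁) ⟶ (QU.obj (op Tr.obj₃))⟦(1:ℤ)⟧,
    Triangle.mk (QU.map Tr.mor₂.op) (QU.map Tr.mor₁.op) h ∈ distTriang T
  QT_pureInjective : ∀ X : T, IsPureInjective (QT.obj (op X))
  QU_pureInjective : ∀ Y : U, IsPureInjective (QU.obj (op Y))
  /-- the natural transformation `i : X ⟶ Q²X` -/
  i : 𝟭 T ⟶ QT.rightOp ⋙ QU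
  /-- the natural transformation `i : Y ⟶ Q²Y` -/
  j : 𝟭 U ⟶ QU.rightOp ⋙ QT
  i_pureMono : ∀ X : T, IsPureMono (i.app X)
  j_pureMono : ∀ Y : U, IsPureMono (j.app Y)
  Qi : ∀ X : T, j.app (QT.obj (op X)) ≫ QT.map (i.app X).op = 𝟙 (QT.obj (op X))
  Qj : ∀ Y : U, i.app (QU.obj (op Y)) ≫ QU.map (j.app Y).op = 𝟙 (QU.obj (op Y))
  /-- `Q(⊕ᵢ Xᵢ) ≅ ∏ᵢ Q(Xᵢ)`: `Q` sends coproducts to products. -/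
  QT_coproductsToProducts :
    ∀ ⦃α : Type v⦄ (X : α → T) (c : Cofan X), Nonempty (IsColimit c) →
      Nonempty (IsLimit (Fan.mk (QT.obj (op c.pt)) fun a => QT.map (c.inj a).op))
  QU_coproductsToProducts :
    ∀ ⦃α : Type v⦄ (X : α → U) (c : Cofan X), Nonempty (IsColimit c) →
      Nonempty (IsLimit (Fan.mk (QU.obj (op c.pt)) fun a => QU.map (c.inj a).op))

end DualityTriple

section Classes

variable {C : Type u} [Category.{v} C]

/-- A class of objects is closed under retracts. -/
def ClosedUnderRetracts (A : Set C) : Prop :=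
  ∀ ⦃X : C⦄, X ∈ A → ∀ ⦃Y : C⦄, (∃ (s : Y ⟶ X) (r : X ⟶ Y), s ≫ r = 𝟙 Y) → Y ∈ A

/-- A class of objects is closed under finite coproducts. -/
def ClosedUnderFiniteCoproducts (A : Set C) : Prop :=
  ∀ ⦃X Y : C⦄, X ∈ A → Y ∈ A → ∀ c : BinaryCofan X Y, Nonempty (IsColimit c) → c.pt ∈ A

/-- A class of objects is closed under set-indexed products. -/
def ClosedUnderProducts (A : Set C) : Prop :=
  ∀ ⦃α : Type v⦄ (X : α → C), (∀ a, X a ∈ A) → ∀ c : Fan X, Nonempty (IsLimit c) → c.pt ∈ A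

/-- A class of objects is closed under set-indexed coproducts. -/
def ClosedUnderCoproducts (A : Set C) : Prop :=
  ∀ ⦃α : Type v⦄ (X : α → C), (∀ a, X a ∈ A) → ∀ c : Cofan X, Nonempty (IsColimit c) → c.pt ∈ A

/-- A class of objects is closed under isomorphisms. -/
def ClosedUnderIso (A : Set C) : Prop :=
  ∀ ⦃X : C⦄, X ∈ A → ∀ ⦃Y : C⦄, Nonempty (X ≅ Y) → Y ∈ A

end Classes

section TriangulatedClasses

variable {T} [HasZeroObject T] [Preadditive T] [HasShift T ℤ]
  [∀ n : ℤ, (shiftFunctor T n).Additive] [Pretriangulated T]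

/-- A class of objects is closed under extensions (triangles). -/
def ClosedUnderExtensions (A : Set T) : Prop :=
  ∀ Tr ∈ distTriang T, Tr.obj₁ ∈ A → Tr.obj₃ ∈ A → Tr.obj₂ ∈ A

/-- A class of objects is *triangulated* if it is closed under isomorphisms, shifts
(in both directions) and triangles. -/
def IsTriangulatedClass (A : Set T) : Prop :=
  ClosedUnderIso A ∧ (∀ X ∈ A, X⟦(1:ℤ)⟧ ∈ A) ∧ (∀ X ∈ A, X⟦(-1:ℤ)⟧ ∈ A) ∧
    ClosedUnderExtensions A

/-- A class of objects is closed under pure subobjects. -/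
def ClosedUnderPureSubobjects (A : Set T) : Prop :=
  ∀ ⦃X Y : T⦄ (f : X ⟶ Y), IsPureMono f → Y ∈ A → X ∈ A

/-- A class of objects is closed under pure quotients. -/
def ClosedUnderPureQuotients (A : Set T) : Prop :=
  ∀ ⦃Y Z : T⦄ (g : Y ⟶ Z), IsPureEpi g → Y ∈ A → Z ∈ A

/-- A class of objects is closed under pure extensions. -/
def ClosedUnderPureExtensions (A : Set T) : Prop :=
  ∀ Tr : Triangle T, IsPureTriangle Tr → Tr.obj₁ ∈ A → Tr.obj₃ ∈ A → Tr.obj₂ ∈ A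

end TriangulatedClasses

section DualityPairs

variable {T} {U : Type u} [Category.{v} U]
variable [HasZeroObject T] [Preadditive T] [HasShift T ℤ]
  [∀ n : ℤ, (shiftFunctor T n).Additive] [Pretriangulated T]
variable [HasZeroObject U] [Preadditive U] [HasShift U ℤ]
  [∀ n : ℤ, (shiftFunctor U n).Additive] [Pretriangulated U]

/-- A pair of classes `(A, B)` is a *duality pair* with respect to a contravariant functor
`Q : Tᵒᵖ ⥤ U` if `X ∈ A ↔ Q X ∈ B` and `B` is closed under finite coproducts and retracts. -/
def IsDualityPairFor (Q : Tᵒᵖ ⥤ U) (A : Set T) (B : Set U) : Prop :=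
  (∀ X : T, X ∈ A ↔ Q.obj (op X) ∈ B) ∧
    ClosedUnderFiniteCoproducts B ∧ ClosedUnderRetracts B

/-- A *duality pair* on a duality triple `(T, U, Q)`. -/
def IsDualityPair (D : DualityTriple T U) (A : Set T) (B : Set U) : Prop :=
  IsDualityPairFor D.QT A B

/-- A duality pair is *symmetric* if `(B, A)` is also a duality pair. -/
def IsSymmetricDualityPair (D : DualityTriple T U) (A : Set T) (B : Set U) : Prop :=
  IsDualityPairFor D.QT A B ∧ IsDualityPairFor D.QU B A

end DualityPairs

end Paper

namespace Paper

/-- Let `(T, U, Q)` be a duality triple and `f : X ⟶ Y` a morphism in `T`.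
Then `f` is phantom if and only if the composite `i_Y ∘ f : X ⟶ Y ⟶ Q²Y` is zero. -/
theorem phantom_iff_comp_i_eq_zero
    {T U : Type u} [Category.{v} T] [Category.{v} U]
    [HasZeroObject T] [Preadditive T] [HasShift T ℤ]
    [∀ n : ℤ, (shiftFunctor T n).Additive] [Pretriangulated T]
    [HasZeroObject U] [Preadditive U] [HasShift U ℤ]
    [∀ n : ℤ, (shiftFunctor U n).Additive] [Pretriangulated U]
    (D : DualityTriple T U) {X Y : T} (f : X ⟶ Y) :
    IsPhantom f ↔ f ≫ D.i.app Y = 0 := by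
  constructor
  · intro hf
    apply D.QU_pureInjective (D.QT.obj (op Y))
    intro C hC g
    rw [← Category.assoc, hf hC g, zero_comp]
  · intro h C hC g
    obtain ⟨Z, g', h', hpure⟩ := D.i_pureMono Y
    have hinj := (hpure.2 hC).1
    have : (g ≫ f) ≫ D.i.app Y = (0 : C ⟶ Y) ≫ D.i.app Y := by
      rw [Category.assoc, h, comp_zero, zero_comp]
    exact hinj this

end Paper
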